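/- arXiv:2412.04612 — 6 statements merged into one kernel-verified Lean document; each statement's English description precedes it below -/
import Mathlib

section
/- Let e_1,…,e_n be a basis of A. Then A is baric if and only if the Etherington system of A with respect to e_1,…,e_n has a nontrivial solution. -/
/-- A weight homomorphism of a (not necessarily associative, commutative or unital)
`K`-algebra `A` is a nonzero `K`-linear map `A → K` that is multiplicative. -/
def IsWeightHom {K A : Type*} [Field K] [NonUnitalNonAssocRing A] [Module K A]
    (w : A →ₗ[K] K) : Prop :=
  w ≠ 0 ∧ ∀ a b : A, w (a * b) = w a * w b

/-- `x : Fin n → K` is a solution of the Etherington system of `A` with respect to the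
basis `e`, whose structure constants are `γ i j k = e.repr (e i * e j) k`. -/
def EthSol {K A : Type*} [Field K] [NonUnitalNonAssocRing A] [Module K A] {n : ℕ}
    (e : Module.Basis (Fin n) K A) (x : Fin n → K) : Prop :=
  ∀ i j, x i * x j = ∑ k, e.repr (e i * e j) k * x k

/-- A basis `e` is semi-natural if all its structure constants `γ i j k = e.repr (e i * e j) k`
satisfy `∑ k, γ i j k = 1`. -/
def SemiNatural {K A : Type*} [Field K] [NonUnitalNonAssocRing A] [Module K A] {n : ℕ}
    (e : Module.Basis (Fin n) K A) : Prop :=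
  ∀ i j, ∑ k, e.repr (e i * e j) k = 1


/-- `A` is baric if and only if the Etherington system of `A` with respect to the basis `e`
has a nontrivial solution. -/
theorem stmt_1 (K A : Type*) [Field K] [NonUnitalNonAssocRing A] [Module K A]
    [SMulCommClass K A A] [IsScalarTower K A A] (n : ℕ) (e : Module.Basis (Fin n) K A) :
    (∃ w : A →ₗ[K] K, IsWeightHom w) ↔ (∃ x : Fin n → K, x ≠ 0 ∧ EthSol e x) := by
  constructor
  · rintro ⟨w, hw0, hwm⟩
    refine ⟨fun i => w (e i), ?_, fun i j => ?_⟩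
    · intro h
      apply hw0
      apply Module.Basis.ext e
      intro i
      simpa using congrFun h i
    · rw [← hwm]
      conv_lhs => rw [← e.sum_repr (e i * e j)]
      simp only [map_sum, map_smul, smul_eq_mul]
  · rintro ⟨x, hx, hsol⟩
    refine ⟨e.constr K x, ?_, ?_⟩
    · intro h
      apply hx
      funext i
      have := congrArg (fun f => f (e i)) h
      simpa using this
    · intro a b
      set w := e.constr K x with hw
      have hwe : ∀ i, w (e i) = x i := fun i => e.constr_basis K x i
      have key : ∀ i j, w (e i * e j) = w (e i) * w (e j) := by
        intro i j
        conv_lhs => rw [← e.sum_repr (e i * e j)]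
        rw [map_sum]
        simp only [map_smul, hwe, smul_eq_mul]
        rw [← hsol i j]
      conv_lhs => rw [← e.sum_repr a, ← e.sum_repr b]
      conv_rhs => rw [← e.sum_repr a, ← e.sum_repr b]
      rw [Finset.sum_mul_sum, map_sum, map_sum, map_sum, Finset.sum_mul_sum]
      refine Finset.sum_congr rfl fun i _ => ?_
      rw [map_sum]
      refine Finset.sum_congr rfl fun j _ => ?_
      rw [smul_mul_assoc, mul_smul_comm, map_smul, map_smul, map_smul, map_smul, key,
        smul_eq_mul, smul_eq_mul, smul_eq_mul, smul_eq_mul]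
      ring
end

section
/- Let A be a baric algebra with a basis e_1,…,e_n whose structure constants γ_{ijk} satisfy γ_{ijk} = γ_{ij'k} for all 1 ≤ i,j,j',k ≤ n. Then A has exactly one weight homomorphism. -/
/-- A baric algebra with a basis whose structure constants satisfy `γ i j k = γ i j' k` for
all `i, j, j', k` has exactly one weight homomorphism. -/
theorem stmt_8 (K A : Type*) [Field K] [NonUnitalNonAssocRing A] [Module K A]
    [SMulCommClass K A A] [IsScalarTower K A A] (n : ℕ) (e : Module.Basis (Fin n) K A)
    (hγ : ∀ i j j' k : Fin n, e.repr (e i * e j) k = e.repr (e i * e j') k)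
    (hbaric : ∃ w : A →ₗ[K] K, IsWeightHom w) :
    ∃! w : A →ₗ[K] K, IsWeightHom w := by
  obtain ⟨w, hw⟩ := hbaric
  have H : ∀ (v : A →ₗ[K] K), IsWeightHom v → ∀ j, v (e j) = ∑ k, e.repr (e j * e j) k := by
    intro v hv
    have hexp : ∀ a : A, v a = ∑ k, e.repr a k * v (e k) := by
      intro a
      conv_lhs => rw [← Module.Basis.sum_repr e a]
      rw [map_sum]
      simp [smul_eq_mul]
    have hmul : ∀ i j, v (e i) * v (e j) = ∑ k, e.repr (e i * e j) k * v (e k) := by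
      intro i j
      rw [← hv.2, hexp]
    have hex : ∃ i, v (e i) ≠ 0 := by
      by_contra h
      push_neg at h
      apply hv.1
      ext a
      simp [hexp a, h]
    obtain ⟨i0, hi0⟩ := hex
    have hconst : ∀ j j', v (e j) = v (e j') := by
      intro j j'
      apply mul_left_cancel₀ hi0
      rw [hmul, hmul]
      exact Finset.sum_congr rfl fun k _ => by rw [hγ i0 j j' k]
    intro j
    have hc : v (e j) ≠ 0 := fun h => hi0 ((hconst i0 j).trans h)
    apply mul_right_cancel₀ hc
    rw [hmul j j, Finset.sum_mul]
    exact Finset.sum_congr rfl fun k _ => by rw [hconst k j]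
  exact ⟨w, hw, fun v hv => e.ext fun j => by rw [H v hv j, H w hw j]⟩
end

section
/- Let e_1,…,e_n be a semi-natural basis of A all of whose structure constants are equal to one another, i.e., there exists γ ∈ K with γ_{ijk} = γ for all 1 ≤ i,j,k ≤ n. Let ω : A → K be the K-linear map with ω(e_i) = 1 for all i. Then every element a ∈ A with ω(a) = 0 satisfies a² = 0 (so the kernel of ω is nil). -/
/-- If `e` is a semi-natural basis of `A` all of whose structure constants are equal to one
another, and `ω : A → K` is the linear map with `ω (e i) = 1` for all `i`, then every
`a ∈ A` with `ω a = 0` satisfies `a * a = 0`; so the kernel of `ω` is nil. -/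
theorem stmt_9 (K A : Type*) [Field K] [NonUnitalNonAssocRing A] [Module K A]
    [SMulCommClass K A A] [IsScalarTower K A A] (n : ℕ) (e : Module.Basis (Fin n) K A)
    (he : SemiNatural e) (γ : K) (hγ : ∀ i j k : Fin n, e.repr (e i * e j) k = γ)
    (ω : A →ₗ[K] K) (hω : ∀ i : Fin n, ω (e i) = 1) :
    ∀ a : A, ω a = 0 → a * a = 0 := by
  intro a ha
  have hee : ∀ i j : Fin n, e i * e j = γ • ∑ k, e k := by
    intro i j
    conv_lhs => rw [← e.sum_repr (e i * e j)]
    rw [Finset.smul_sum]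
    exact Finset.sum_congr rfl fun k _ => by rw [hγ]
  have hsum : ∑ i, e.repr a i = 0 := by
    have h := congrArg ω (e.sum_repr a).symm
    rw [map_sum] at h
    simp only [map_smul, hω, smul_eq_mul, mul_one, ha] at h
    exact h.symm
  conv_lhs => rw [← e.sum_repr a]
  rw [Finset.sum_mul_sum]
  have : ∀ i ∈ Finset.univ, ∀ j ∈ Finset.univ,
      (e.repr a i • e i) * (e.repr a j • e j) = e.repr a i • e.repr a j • (γ • ∑ k, e k) := by
    intro i _ j _
    rw [smul_mul_assoc, mul_smul_comm, hee]
  rw [Finset.sum_congr rfl (fun i hi => Finset.sum_congr rfl (fun j hj => this i hi j hj))]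
  simp only [← Finset.smul_sum, ← Finset.sum_smul]
  rw [hsum, zero_smul]
end

section
/- Every 2-dimensional non-commutative baric algebra A over K has exactly one weight homomorphism. -/
/-- Two weight homomorphisms with the same kernel are equal. -/
lemma weight_eq_of_ker_eq {K A : Type*} [Field K] [NonUnitalNonAssocRing A] [Module K A]
    (w w' : A →ₗ[K] K) (hw : IsWeightHom w) (hw' : IsWeightHom w')
    (hk : LinearMap.ker w = LinearMap.ker w') : w = w' := by
  obtain ⟨hw0, hwm⟩ := hw
  obtain ⟨hw'0, hw'm⟩ := hw'
  obtain ⟨a, ha⟩ : ∃ a, w a ≠ 0 := by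
    by_contra h
    push_neg at h
    exact hw0 (LinearMap.ext fun x => by simpa using h x)
  set c : K := w' a / w a with hc
  have hprop : ∀ x, w' x = c * w x := by
    intro x
    have hmem : x - (w x / w a) • a ∈ LinearMap.ker w := by
      simp [LinearMap.mem_ker, map_sub, map_smul, div_mul_cancel₀ _ ha]
    rw [hk, LinearMap.mem_ker] at hmem
    have : w' x = (w x / w a) * w' a := by
      have := hmem
      rw [map_sub, map_smul, sub_eq_zero] at this
      simpa using this
    rw [this, hc]; ring
  have hc2 : c * (w a * w a) = c * c * (w a * w a) := by
    have h1 : w' (a * a) = c * (w a * w a) := by rw [hprop, hwm]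
    have h2 : w' (a * a) = c * c * (w a * w a) := by rw [hw'm, hprop]; ring
    rw [← h1, h2]
  have hcc : c = c * c := by
    have := mul_right_cancel₀ (mul_ne_zero ha ha) hc2
    exact this
  have hcne : c ≠ 0 := by
    intro h0
    apply hw'0
    ext x
    simp [hprop x, h0]
  have hc1 : c = 1 := by
    have h : c * 1 = c * c := by rw [mul_one]; exact hcc
    exact (mul_left_cancel₀ hcne h).symm ▸ rfl
  ext x
  rw [hprop x, hc1, one_mul]

theorem weight_comm {K A : Type*} [Field K] [NonUnitalNonAssocRing A] [Module K A]
    [FiniteDimensional K A] (hdim : Module.finrank K A = 2)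
    (w w' : A →ₗ[K] K) (hw : IsWeightHom w) (hw' : IsWeightHom w') (hne : w ≠ w') :
    ∀ a b : A, a * b = b * a := by
  have hker1 : ∀ v : A →ₗ[K] K, v ≠ 0 → Module.finrank K (LinearMap.ker v) = 1 := by
    intro v hv
    obtain ⟨a, ha⟩ : ∃ a, v a ≠ 0 := by
      by_contra h
      push_neg at h
      exact hv (LinearMap.ext fun x => by simpa using h x)
    have hsur : Function.Surjective v := fun c =>
      ⟨(c / v a) • a, by simp [map_smul, div_mul_cancel₀ _ ha]⟩
    have := LinearMap.finrank_range_add_finrank_ker v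
    rw [LinearMap.range_eq_top.mpr hsur, finrank_top, Module.finrank_self, hdim] at this
    omega
  set L : A →ₗ[K] K × K := w.prod w' with hL
  have hinj : Function.Injective L := by
    rw [← LinearMap.ker_eq_bot]
    by_contra h
    obtain ⟨x, hx, hx0⟩ := Submodule.exists_mem_ne_zero_of_ne_bot h
    have hxw : x ∈ LinearMap.ker w := by
      have := hx; rw [LinearMap.mem_ker, LinearMap.prod_apply] at this
      simpa [LinearMap.mem_ker] using congrArg Prod.fst this
    have hxw' : x ∈ LinearMap.ker w' := by
      have := hx; rw [LinearMap.mem_ker, LinearMap.prod_apply] at this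
      simpa [LinearMap.mem_ker] using congrArg Prod.snd this
    have hspanw : (K ∙ x) = LinearMap.ker w :=
      Submodule.eq_of_le_of_finrank_le ((Submodule.span_singleton_le_iff_mem _ _).mpr hxw)
        (by rw [hker1 w hw.1, finrank_span_singleton hx0])
    have hspanw' : (K ∙ x) = LinearMap.ker w' :=
      Submodule.eq_of_le_of_finrank_le ((Submodule.span_singleton_le_iff_mem _ _).mpr hxw')
        (by rw [hker1 w' hw'.1, finrank_span_singleton hx0])
    exact hne (weight_eq_of_ker_eq w w' hw hw' (hspanw ▸ hspanw'))
  have hsurL : Function.Surjective L := by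
    have hfr : Module.finrank K A = Module.finrank K (K × K) := by
      simp [hdim, Module.finrank_self]
    exact (LinearMap.injective_iff_surjective_of_finrank_eq_finrank hfr).mp hinj
  obtain ⟨e1, he1⟩ := hsurL (0, 1)
  obtain ⟨e2, he2⟩ := hsurL (1, 0)
  have key : ∀ a b : A, a * b = (w a * w b) • e2 + (w' a * w' b) • e1 := by
    intro a b
    apply hinj
    rw [map_add, map_smul, map_smul, he1, he2]
    have h1 : L (a * b) = (w a * w b, w' a * w' b) := by
      rw [hL, LinearMap.prod_apply]
      simp [hw.2, hw'.2]
    rw [h1, Prod.ext_iff]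
    simp
  intro a b
  rw [key a b, key b a, mul_comm (w a), mul_comm (w' a)]

/-- Every 2-dimensional non-commutative baric algebra has exactly one weight
homomorphism. -/
theorem stmt_10 (K A : Type*) [Field K] [NonUnitalNonAssocRing A] [Module K A]
    [SMulCommClass K A A] [IsScalarTower K A A] [FiniteDimensional K A]
    (hdim : Module.finrank K A = 2)
    (hnc : ∃ a b : A, a * b ≠ b * a)
    (hbaric : ∃ w : A →ₗ[K] K, IsWeightHom w) :
    ∃! w : A →ₗ[K] K, IsWeightHom w := by
  obtain ⟨w0, hw0⟩ := hbaric
  refine ⟨w0, hw0, fun w hw => ?_⟩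
  by_contra hne
  obtain ⟨a, b, hab⟩ := hnc
  exact hab (weight_comm hdim w w0 hw hw0 hne a b)
end

section
/- Let e_1,…,e_n and f_1,…,f_n be bases of A, and let M = (σ_{ik}) be the transition matrix from e_1,…,e_n to f_1,…,f_n. Then the basis e_1,…,e_n is semi-natural if and only if the n-tuple (α_1,…,α_n), where α_i = Σ_{k=1}^n σ_{ik}, is a solution of the Etherington system of A with respect to f_1,…,f_n. -/
noncomputable def sumRepr {K A : Type*} [Field K] [NonUnitalNonAssocRing A] [Module K A]
    {n : ℕ} (e : Module.Basis (Fin n) K A) : A →ₗ[K] K where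
  toFun a := ∑ k, e.repr a k
  map_add' a b := by simp [Finset.sum_add_distrib]
  map_smul' c a := by simp [Finset.mul_sum]

lemma sumRepr_apply {K A : Type*} [Field K] [NonUnitalNonAssocRing A] [Module K A]
    {n : ℕ} (e : Module.Basis (Fin n) K A) (a : A) : sumRepr e a = ∑ k, e.repr a k := rfl

lemma sumRepr_self {K A : Type*} [Field K] [NonUnitalNonAssocRing A] [Module K A]
    {n : ℕ} (e : Module.Basis (Fin n) K A) (i : Fin n) : sumRepr e (e i) = 1 := by
  simp [sumRepr_apply, e.repr_self, Finsupp.single_apply]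

lemma mult_iff_basis {K A : Type*} [Field K] [NonUnitalNonAssocRing A] [Module K A]
    [SMulCommClass K A A] [IsScalarTower K A A] {n : ℕ}
    (e : Module.Basis (Fin n) K A) (w : A →ₗ[K] K) :
    (∀ i j, w (e i * e j) = w (e i) * w (e j)) ↔ ∀ a b : A, w (a * b) = w a * w b := by
  constructor
  · intro h a b
    have hB : (LinearMap.mul K A).compr₂ w
        = (LinearMap.mul K K).compl₁₂ w w := by
      refine e.ext fun i => e.ext fun j => ?_
      simpa using h i j
    have := LinearMap.congr_fun (LinearMap.congr_fun hB a) b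
    simpa using this
  · intro h i j; exact h _ _

/-- Let `σ` be the transition matrix from the basis `e` to the basis `f` (so that
`f i = ∑ k, σ i k • e k`).  Then `e` is semi-natural if and only if the tuple
`(α 1, …, α n)` with `α i = ∑ k, σ i k` is a solution of the Etherington system of `A`
with respect to `f`. -/
theorem stmt_11 (K A : Type*) [Field K] [NonUnitalNonAssocRing A] [Module K A]
    [SMulCommClass K A A] [IsScalarTower K A A] (n : ℕ)
    (e f : Module.Basis (Fin n) K A) (σ : Matrix (Fin n) (Fin n) K)
    (hσ : ∀ i, f i = ∑ k, σ i k • e k) :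
    SemiNatural e ↔ EthSol f (fun i => ∑ k, σ i k) := by
  set w := sumRepr e with hw
  have hwf : ∀ i, w (f i) = ∑ k, σ i k := by
    intro i
    rw [hσ i, map_sum]
    simp [hw, sumRepr_self, map_smul]
  have hmul : ∀ a : A, w a = ∑ k, f.repr a k * w (f k) := by
    intro a
    conv_lhs => rw [← f.sum_repr a]
    rw [map_sum]
    simp [map_smul, smul_eq_mul]
  have h1 : SemiNatural e ↔ ∀ i j, w (e i * e j) = w (e i) * w (e j) := by
    unfold SemiNatural
    simp [sumRepr_apply, sumRepr_self, hw]
  have h2 : EthSol f (fun i => ∑ k, σ i k) ↔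
      ∀ i j, w (f i * f j) = w (f i) * w (f j) := by
    unfold EthSol
    constructor
    · intro h i j
      rw [hmul (f i * f j), hwf i, hwf j]
      simp only [hwf]
      exact (h i j).symm
    · intro h i j
      simp only [hwf] at h ⊢
      rw [← h i j, hmul (f i * f j)]
      simp [hwf]
  rw [h1, h2, mult_iff_basis e w, ← mult_iff_basis f w]
end

section
/- Let A be a baric algebra, let S be the set of semi-natural bases of A, and define the relation ~ on S by: e ~ e' if and only if the transition matrix from e to e' is row stochastic. Then ~ is an equivalence relation on S, and the map sending the equivalence class of a semi-natural basis e_1,…,e_n to the weight homomorphism ω determined by ω(e_i) = 1 for all i is a well-defined bijection from S/~ onto the set of weight homomorphisms of A. -/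
/-- The relation on semi-natural bases: the transition matrix from `e` to `e'`
(whose `(i, k)` entry is `e.repr (e' i) k`) is row stochastic. -/
def snRel {K A : Type*} [Field K] [NonUnitalNonAssocRing A] [Module K A] {n : ℕ}
    (e e' : {e : Module.Basis (Fin n) K A // SemiNatural e}) : Prop :=
  ∀ i, ∑ k, e.1.repr (e'.1 i) k = 1


section Aux

variable {K A : Type*} [Field K] [NonUnitalNonAssocRing A] [Module K A] {n : ℕ}

/-- The linear functional sending each basis vector to `1`. -/
noncomputable def wOf (e : Module.Basis (Fin n) K A) : A →ₗ[K] K := e.constr K (fun _ => 1)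

lemma wOf_apply (e : Module.Basis (Fin n) K A) (a : A) : wOf e a = ∑ k, e.repr a k := by
  simp [wOf, Module.Basis.constr_apply_fintype, Module.Basis.equivFun_apply]

lemma wOf_basis (e : Module.Basis (Fin n) K A) (i : Fin n) : wOf e (e i) = 1 := by
  simp [wOf]

lemma wOf_mul [SMulCommClass K A A] [IsScalarTower K A A]
    (e : Module.Basis (Fin n) K A) (he : SemiNatural e) (a b : A) :
    wOf e (a * b) = wOf e a * wOf e b := by
  have key : (LinearMap.mul K A).compr₂ (wOf e) =
      (LinearMap.mul K K).compl₁₂ (wOf e) (wOf e) := by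
    apply e.ext; intro i; apply e.ext; intro j
    simp only [LinearMap.compr₂_apply, LinearMap.compl₁₂_apply, LinearMap.mul_apply',
      wOf_basis, wOf_apply, one_mul]
    simpa using he i j
  have h2 := LinearMap.congr_fun (LinearMap.congr_fun key a) b
  simpa using h2

lemma snRel_iff (e e' : {e : Module.Basis (Fin n) K A // SemiNatural e}) :
    snRel e e' ↔ wOf e.1 = wOf e'.1 := by
  constructor
  · intro h
    apply e'.1.ext
    intro i
    rw [wOf_apply, wOf_basis]
    exact h i
  · intro h i
    rw [← wOf_apply, h, wOf_basis]

lemma exists_basis_w_eq_one [FiniteDimensional K A] (hn : Module.finrank K A = n)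
    (w : A →ₗ[K] K) (hw : w ≠ 0) :
    ∃ e : Module.Basis (Fin n) K A, ∀ i, w (e i) = 1 := by
  obtain ⟨a, ha⟩ : ∃ a : A, w a ≠ 0 := by
    by_contra h; push_neg at h; exact hw (LinearMap.ext fun x => h x)
  set b : A := (w a)⁻¹ • a with hb
  have hwb : w b = 1 := by simp [hb, inv_mul_cancel₀ ha]
  have hsurj : Function.Surjective w := by
    intro c
    exact ⟨(c * (w a)⁻¹) • a, by simp [mul_assoc, inv_mul_cancel₀ ha]⟩
  have hrange : LinearMap.range w = ⊤ := LinearMap.range_eq_top.2 hsurj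
  have hrk := LinearMap.finrank_range_add_finrank_ker w
  rw [hrange, finrank_top, Module.finrank_self, hn] at hrk
  set m := Module.finrank K (LinearMap.ker w) with hm
  have hmn : 1 + m = n := hrk
  let u : Module.Basis (Fin m) K (LinearMap.ker w) := Module.finBasis K _
  have hwu : ∀ j, w (u j : A) = 0 := fun j => (u j).2
  let f : Option (Fin m) → A := fun o => Option.rec b (fun j => b + (u j : A)) o
  have hwf : ∀ o, w (f o) = 1 := by
    rintro (_ | j) <;> simp [f, hwb, hwu]
  have hui : LinearIndependent K (fun j => (u j : A)) :=
    u.linearIndependent.map' (LinearMap.ker w).subtype (Submodule.ker_subtype _)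
  have hind : LinearIndependent K f := by
    rw [Fintype.linearIndependent_iff]
    intro g hg
    have hsum : g none + ∑ j, g (some j) = 0 := by
      have := congrArg w hg
      simpa [f, map_sum, hwb, hwu, mul_add] using this
    have hg' : ∑ j, g (some j) • (u j : A) = 0 := by
      rw [Fintype.sum_option] at hg
      have : g none • b + ∑ j, (g (some j) • b + g (some j) • (u j : A)) = 0 := by
        simpa [f, smul_add] using hg
      rw [Finset.sum_add_distrib, ← Finset.sum_smul, ← add_assoc, ← add_smul, hsum,
        zero_smul, zero_add] at this
      exact this
    have hz : ∀ j, g (some j) = 0 :=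
      Fintype.linearIndependent_iff.1 hui _ hg'
    rintro (_ | j)
    · simpa [hz] using hsum
    · exact hz j
  have hspan : ⊤ ≤ Submodule.span K (Set.range f) := by
    intro x _
    have hbmem : b ∈ Submodule.span K (Set.range f) :=
      Submodule.subset_span ⟨none, rfl⟩
    have humem : ∀ j, (u j : A) ∈ Submodule.span K (Set.range f) := by
      intro j
      have h1 : b + (u j : A) ∈ Submodule.span K (Set.range f) :=
        Submodule.subset_span ⟨some j, rfl⟩
      have := Submodule.sub_mem _ h1 hbmem
      simpa using this
    have hker : x - w x • b ∈ LinearMap.ker w := by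
      simp [LinearMap.mem_ker, hwb]
    have hker_le : (LinearMap.ker w : Submodule K A) ≤ Submodule.span K (Set.range f) := by
      intro y hy
      have hy' : (⟨y, hy⟩ : LinearMap.ker w) ∈ Submodule.span K (Set.range u) := by
        rw [u.span_eq]; trivial
      have := Submodule.mem_map_of_mem (f := (LinearMap.ker w).subtype) hy'
      rw [Submodule.map_span] at this
      refine Submodule.span_le.2 ?_ this
      rintro _ ⟨_, ⟨j, rfl⟩, rfl⟩
      exact humem j
    have hx : x = (x - w x • b) + w x • b := by abel
    rw [hx]
    exact Submodule.add_mem _ (hker_le hker) (Submodule.smul_mem _ _ hbmem)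
  let eb : Module.Basis (Option (Fin m)) K A := Module.Basis.mk hind hspan
  have hcard : Fintype.card (Option (Fin m)) = n := by
    simp [Fintype.card_option, ← hmn, Nat.add_comm]
  let eqv : Option (Fin m) ≃ Fin n := Fintype.equivFinOfCardEq hcard
  refine ⟨eb.reindex eqv, fun i => ?_⟩
  rw [Module.Basis.reindex_apply, Module.Basis.mk_apply]
  exact hwf _

end Aux

/-- For a baric algebra `A`, the relation `snRel` on the set of semi-natural bases (two
bases are related iff the transition matrix from one to the other is row stochastic) is an
equivalence relation, and the map sending the class of a semi-natural basis `e` to the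
weight homomorphism `ω` with `ω (e i) = 1` for all `i` is a well-defined bijection from the
quotient onto the set of weight homomorphisms of `A`. -/
theorem stmt_19 (K A : Type*) [Field K] [NonUnitalNonAssocRing A] [Module K A]
    [SMulCommClass K A A] [IsScalarTower K A A] [FiniteDimensional K A]
    (n : ℕ) (hn : Module.finrank K A = n)
    (hbaric : ∃ w : A →ₗ[K] K, IsWeightHom w) :
    Equivalence (snRel (K := K) (A := A) (n := n)) ∧
    ∃ F : Quot (snRel (K := K) (A := A) (n := n)) → {w : A →ₗ[K] K // IsWeightHom w},
      Function.Bijective F ∧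
      ∀ e : {e : Module.Basis (Fin n) K A // SemiNatural e},
        ∀ i, (F (Quot.mk snRel e)).1 (e.1 i) = 1 := by
  -- `n` is positive since `A` is baric
  obtain ⟨w0, hw0ne, _⟩ := hbaric
  have hA : Nontrivial A := by
    obtain ⟨a, ha⟩ : ∃ a : A, w0 a ≠ 0 := by
      by_contra h; push_neg at h; exact hw0ne (LinearMap.ext fun x => h x)
    exact ⟨a, 0, fun h => ha (by rw [h, map_zero])⟩
  have hn0 : 0 < n := hn ▸ Module.finrank_pos
  have hwhom : ∀ e : {e : Module.Basis (Fin n) K A // SemiNatural e}, IsWeightHom (wOf e.1) := by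
    intro e
    refine ⟨fun h => ?_, wOf_mul e.1 e.2⟩
    have := wOf_basis e.1 ⟨0, hn0⟩
    rw [h] at this
    simp at this
  have hequiv : Equivalence (snRel (K := K) (A := A) (n := n)) := by
    refine ⟨fun e => (snRel_iff e e).2 rfl, fun h => ?_, fun h1 h2 => ?_⟩
    · exact (snRel_iff _ _).2 ((snRel_iff _ _).1 h).symm
    · exact (snRel_iff _ _).2 (((snRel_iff _ _).1 h1).trans ((snRel_iff _ _).1 h2))
  refine ⟨hequiv, ?_⟩
  refine ⟨Quot.lift (fun e => (⟨wOf e.1, hwhom e⟩ : {w : A →ₗ[K] K // IsWeightHom w}))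
    (fun a b h => Subtype.ext ((snRel_iff a b).1 h)), ⟨?_, ?_⟩, ?_⟩
  · -- injective
    intro x y
    induction x using Quot.ind with | _ a =>
    induction y using Quot.ind with | _ b =>
    intro h
    exact Quot.sound ((snRel_iff a b).2 (congrArg Subtype.val h))
  · -- surjective
    rintro ⟨w, hw⟩
    obtain ⟨e, he⟩ := exists_basis_w_eq_one hn w hw.1
    have hwe : wOf e = w := e.ext fun i => by rw [wOf_basis, he i]
    have hsn : SemiNatural e := by
      intro i j
      rw [← wOf_apply, hwe, hw.2, he i, he j, one_mul]
    exact ⟨Quot.mk _ ⟨e, hsn⟩, Subtype.ext hwe⟩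
  · intro e i
    exact wOf_basis e.1 i
end
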